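/- Let S, T, R be pairwise disjoint nonempty finite subsets of α, let c, d, e be cycles on S, T, R respectively, and let s, s' be two distinct elements of S. Then, in the free K-module on cycles, parallel associativity holds: (c ▷_s d) ▷_{s'} e = (c ▷_{s'} e) ▷_s d. -/

import Mathlib

variable {α : Type*} [DecidableEq α]

/-- The rotation of a list bringing its (first) occurrence of `s` to the front. -/
def rotTo (s : α) (l : List α) : List α := l.rotate (l.idxOf s)

/-- The partial composition of cycles: for a cycle `c` on `S` written, starting at
`s ∈ S`, as `(s, c₁, …, c_{|S|-1})` and a cycle `d` on `T`,
`c ▷_s d := Σ (t₁, …, t_{|T|}, c₁, …, c_{|S|-1})`, the sum over the `|T|` cyclic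
rotations `(t₁, …, t_{|T|})` of a list representing `d`, taken in the free
`K`-module on cycles. -/
noncomputable def cycComp (K : Type*) [CommRing K] (s : α) (c d : Cycle α) :
    Cycle α →₀ K :=
  ∑ i ∈ Finset.range (Quotient.out d).length,
    Finsupp.single (↑((Quotient.out d).rotate i ++ (rotTo s (Quotient.out c)).tail)) 1

/-- The bilinear extension of `▷_s` to the free `K`-module on cycles. -/
noncomputable def cycCompL (K : Type*) [CommRing K] (s : α)
    (x y : Cycle α →₀ K) : Cycle α →₀ K :=
  x.sum fun c a => y.sum fun d b => (a * b) • cycComp K s c d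

namespace CycAux

lemma isRotated_rotTo (s : α) (l : List α) : l ~r rotTo s l := ⟨_, rfl⟩

lemma nodup_rotTo {s : α} {l : List α} : (rotTo s l).Nodup ↔ l.Nodup :=
  List.nodup_rotate

lemma head?_rotTo {s : α} {l : List α} (h : s ∈ l) : (rotTo s l).head? = some s := by
  have hn : l.idxOf s < l.length := List.idxOf_lt_length_iff.2 h
  rw [rotTo, List.head?_rotate hn, List.getElem?_eq_getElem hn, List.getElem_idxOf hn]

lemma rotTo_cons {s : α} {l : List α} (h : s ∈ l) :
    rotTo s l = s :: (rotTo s l).tail := by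
  have h1 := head?_rotTo h
  cases h2 : rotTo s l with
  | nil => rw [h2] at h1; simp at h1
  | cons a t =>
      rw [h2] at h1
      simp only [List.head?_cons, Option.some_inj] at h1
      simp [h1]

set_option linter.unusedSectionVars false in
lemma eq_of_isRotated_head? {l l' : List α} (h : l ~r l') (hn : l.Nodup)
    (hh : l.head? = l'.head?) (hne : l ≠ []) : l = l' := by
  obtain ⟨k, hk⟩ := h
  rw [← List.rotate_mod] at hk
  have hlen : 0 < l.length := List.length_pos_iff.2 hne
  have hk' : k % l.length < l.length := Nat.mod_lt _ hlen
  subst hk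
  rw [List.head?_rotate hk'] at hh
  have h0 : l.head? = l[0]? := by cases l <;> simp
  rw [h0, List.getElem?_eq_getElem hlen, List.getElem?_eq_getElem hk', Option.some_inj] at hh
  have h2 : (0 : ℕ) = k % l.length := (hn.getElem_inj_iff).1 hh
  rw [← h2, List.rotate_zero]

lemma rotTo_congr {s : α} {l l' : List α} (h : l ~r l') (hn : l.Nodup) (hs : s ∈ l) :
    rotTo s l = rotTo s l' := by
  have hs' : s ∈ l' := h.mem_iff.1 hs
  refine eq_of_isRotated_head? ?_ (nodup_rotTo.2 hn) ?_ ?_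
  · exact (isRotated_rotTo s l).symm.trans (h.trans (isRotated_rotTo s l'))
  · rw [head?_rotTo hs, head?_rotTo hs']
  · intro h0
    have := head?_rotTo hs
    rw [h0] at this; simp at this

lemma rotTo_append_cons (s : α) (a b : List α) (hn : (a ++ s :: b).Nodup) :
    rotTo s (a ++ s :: b) = s :: (b ++ a) := by
  have hs : s ∈ a ++ s :: b := by simp
  refine eq_of_isRotated_head? ?_ (nodup_rotTo.2 hn) ?_ ?_
  · refine (isRotated_rotTo s _).symm.trans ⟨a.length, ?_⟩
    have h1 := List.rotate_append_length_eq a (s :: b)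
    simpa using h1
  · rw [head?_rotTo hs]; rfl
  · intro h0
    have := head?_rotTo hs
    rw [h0] at this; simp at this

set_option linter.unusedSectionVars false in
lemma coe_out (c : Cycle α) : ((Quotient.out c : List α) : Cycle α) = c := by
  rw [← Cycle.mk''_eq_coe]; exact Quotient.out_eq' c

set_option linter.unusedSectionVars false in
lemma out_coe_isRotated (l : List α) : (Quotient.out (↑l : Cycle α) : List α) ~r l :=
  Cycle.coe_eq_coe.1 (coe_out (↑l : Cycle α))

lemma rotTo_out_coe {s : α} {L : List α} (hn : L.Nodup) (hs : s ∈ L) :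
    rotTo s (Quotient.out (↑L : Cycle α)) = rotTo s L :=
  rotTo_congr (out_coe_isRotated L) ((out_coe_isRotated L).nodup_iff.2 hn)
    ((out_coe_isRotated L).mem_iff.2 hs)

lemma cycCompL_single_right (K : Type*) [CommRing K] (t : α) (x : Cycle α →₀ K)
    (e : Cycle α) :
    cycCompL K t x (Finsupp.single e 1) = x.sum fun c a => a • cycComp K t c e := by
  unfold cycCompL
  refine Finsupp.sum_congr fun c _ => ?_
  rw [Finsupp.sum_single_index (by simp), mul_one]

set_option linter.unusedSectionVars false in
lemma sum_single_smul (K : Type*) [CommRing K] (g : Cycle α → Cycle α →₀ K)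
    (F : Finset ℕ) (f : ℕ → Cycle α) :
    ((∑ i ∈ F, Finsupp.single (f i) (1 : K)).sum fun c a => a • g c)
      = ∑ i ∈ F, g (f i) := by
  rw [← Finsupp.sum_finset_sum_index (fun a => by simp)
    (fun a b₁ b₂ => by rw [add_smul])]
  refine Finset.sum_congr rfl fun i _ => ?_
  rw [Finsupp.sum_single_index (by simp), one_smul]

end CycAux

/-- Parallel associativity `(c ▷_s d) ▷_{s'} e = (c ▷_{s'} e) ▷_s d` for the
NPL-operad structure on the species of cycles. -/
theorem cycComp_parallel_assoc (K : Type*) [CommRing K]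
    (S T R : Finset α) (hS : S.Nonempty) (hT : T.Nonempty) (hR : R.Nonempty)
    (hST : Disjoint S T) (hSR : Disjoint S R) (hTR : Disjoint T R)
    (c d e : Cycle α)
    (hc : c.Nodup) (hd : d.Nodup) (he : e.Nodup)
    (hcS : c.toFinset = S) (hdT : d.toFinset = T) (heR : e.toFinset = R)
    (s s' : α) (hs : s ∈ S) (hs' : s' ∈ S) (hss' : s ≠ s') :
    cycCompL K s' (cycComp K s c d) (Finsupp.single e 1) =
      cycCompL K s (cycComp K s' c e) (Finsupp.single d 1) := by
  classical
  set lc := (Quotient.out c : List α) with hlcdef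
  set ld := (Quotient.out d : List α) with hlddef
  set le := (Quotient.out e : List α) with hledef
  have hcoec : (↑lc : Cycle α) = c := CycAux.coe_out c
  have hcoed : (↑ld : Cycle α) = d := CycAux.coe_out d
  have hcoee : (↑le : Cycle α) = e := CycAux.coe_out e
  have hlcnd : lc.Nodup := by rw [← Cycle.nodup_coe_iff, hcoec]; exact hc
  have hldnd : ld.Nodup := by rw [← Cycle.nodup_coe_iff, hcoed]; exact hd
  have hlend : le.Nodup := by rw [← Cycle.nodup_coe_iff, hcoee]; exact he
  have hmemc : ∀ x, x ∈ lc ↔ x ∈ S := fun x => by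
    rw [← hcS, ← hcoec, Cycle.coe_toFinset, List.mem_toFinset]
  have hmemd : ∀ x, x ∈ ld ↔ x ∈ T := fun x => by
    rw [← hdT, ← hcoed, Cycle.coe_toFinset, List.mem_toFinset]
  have hmeme : ∀ x, x ∈ le ↔ x ∈ R := fun x => by
    rw [← heR, ← hcoee, Cycle.coe_toFinset, List.mem_toFinset]
  have hslc : s ∈ lc := (hmemc s).2 hs
  have hs'lc : s' ∈ lc := (hmemc s').2 hs'
  set tc := (rotTo s lc).tail with htcdef
  have hcons : rotTo s lc = s :: tc := CycAux.rotTo_cons hslc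
  have hnds : (rotTo s lc).Nodup := CycAux.nodup_rotTo.2 hlcnd
  have hnds' : (rotTo s' lc).Nodup := CycAux.nodup_rotTo.2 hlcnd
  have htcnd : tc.Nodup := by
    have := hnds; rw [hcons] at this; exact this.of_cons
  have hs'tc : s' ∈ tc := by
    have h1 : s' ∈ rotTo s lc := ((CycAux.isRotated_rotTo s lc).mem_iff).1 hs'lc
    rw [hcons, List.mem_cons] at h1
    rcases h1 with h | h
    · exact absurd h.symm hss'
    · exact h
  obtain ⟨u, v, huv⟩ := List.append_of_mem hs'tc
  have hsplit : rotTo s lc = (s :: u) ++ s' :: v := by rw [hcons, huv]; rfl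
  have htcS : ∀ x ∈ tc, x ∈ S := fun x hx => (hmemc x).1
    (((CycAux.isRotated_rotTo s lc).mem_iff).2 (List.mem_of_mem_tail hx))
  -- the rotation of `lc` starting at `s'`
  have hkey : rotTo s' lc = s' :: (v ++ s :: u) := by
    have h2 : rotTo s' lc = rotTo s' (rotTo s lc) :=
      CycAux.rotTo_congr (CycAux.isRotated_rotTo s lc) hlcnd hs'lc
    rw [h2, hsplit]
    exact CycAux.rotTo_append_cons s' (s :: u) v (by rw [← hsplit]; exact hnds)
  have htc' : (rotTo s' lc).tail = v ++ s :: u := by rw [hkey]; rfl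
  have htc'S : ∀ x ∈ v ++ s :: u, x ∈ S := fun x hx => (hmemc x).1
    (((CycAux.isRotated_rotTo s' lc).mem_iff).2 (List.mem_of_mem_tail (htc' ▸ hx)))
  have htc'nd : (v ++ s :: u).Nodup := by
    have := hnds'; rw [hkey] at this; exact this.of_cons
  -- nodup of concatenated representatives
  have hLd : ∀ i, (ld.rotate i ++ tc).Nodup := fun i => by
    refine List.Nodup.append (List.nodup_rotate.2 hldnd) htcnd ?_
    intro x hx1 hx2
    exact Finset.disjoint_left.1 hST (htcS x hx2)
      ((hmemd x).1 (List.mem_rotate.1 hx1))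
  have hMd : ∀ j, (le.rotate j ++ (v ++ s :: u)).Nodup := fun j => by
    refine List.Nodup.append (List.nodup_rotate.2 hlend) htc'nd ?_
    intro x hx1 hx2
    exact Finset.disjoint_left.1 hSR (htc'S x hx2)
      ((hmeme x).1 (List.mem_rotate.1 hx1))
  -- inner compositions, LHS
  have hL : ∀ i, cycComp K s' (↑(ld.rotate i ++ tc)) e
      = ∑ j ∈ Finset.range le.length,
          Finsupp.single (↑(le.rotate j ++ (v ++ (ld.rotate i ++ u))) : Cycle α) (1 : K) := by
    intro i
    have h1 : rotTo s' (Quotient.out (↑(ld.rotate i ++ tc) : Cycle α))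
        = rotTo s' (ld.rotate i ++ tc) :=
      CycAux.rotTo_out_coe (hLd i) (List.mem_append.2 (Or.inr hs'tc))
    have h3 : ld.rotate i ++ tc = (ld.rotate i ++ u) ++ s' :: v := by
      rw [huv, List.append_assoc]
    have h2 : rotTo s' (ld.rotate i ++ tc) = s' :: (v ++ (ld.rotate i ++ u)) := by
      rw [h3]
      exact CycAux.rotTo_append_cons s' _ _ (by rw [← h3]; exact hLd i)
    unfold cycComp
    rw [← hledef, h1, h2]
    rfl
  -- inner compositions, RHS
  have hM : ∀ j, cycComp K s (↑(le.rotate j ++ (v ++ s :: u))) d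
      = ∑ i ∈ Finset.range ld.length,
          Finsupp.single (↑(ld.rotate i ++ (u ++ (le.rotate j ++ v))) : Cycle α) (1 : K) := by
    intro j
    have hsmem : s ∈ le.rotate j ++ (v ++ s :: u) := by simp
    have h1 : rotTo s (Quotient.out (↑(le.rotate j ++ (v ++ s :: u)) : Cycle α))
        = rotTo s (le.rotate j ++ (v ++ s :: u)) :=
      CycAux.rotTo_out_coe (hMd j) hsmem
    have h3 : le.rotate j ++ (v ++ s :: u) = (le.rotate j ++ v) ++ s :: u := by
      rw [List.append_assoc]
    have h2 : rotTo s (le.rotate j ++ (v ++ s :: u)) = s :: (u ++ (le.rotate j ++ v)) := by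
      rw [h3]
      exact CycAux.rotTo_append_cons s _ _ (by rw [← h3]; exact hMd j)
    unfold cycComp
    rw [← hlddef, h1, h2]
    rfl
  -- assemble both sides
  have hcd : cycComp K s c d = ∑ i ∈ Finset.range ld.length,
      Finsupp.single (↑(ld.rotate i ++ tc) : Cycle α) (1 : K) := rfl
  have hce : cycComp K s' c e = ∑ j ∈ Finset.range le.length,
      Finsupp.single (↑(le.rotate j ++ (v ++ s :: u)) : Cycle α) (1 : K) := by
    unfold cycComp
    rw [← hlcdef, ← hledef, htc']
  rw [hcd, hce, CycAux.cycCompL_single_right, CycAux.cycCompL_single_right,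
    CycAux.sum_single_smul K (fun f => cycComp K s' f e),
    CycAux.sum_single_smul K (fun f => cycComp K s f d)]
  rw [Finset.sum_congr rfl fun i _ => hL i, Finset.sum_congr rfl fun j _ => hM j,
    Finset.sum_comm]
  refine Finset.sum_congr rfl fun j _ => Finset.sum_congr rfl fun i _ => ?_
  congr 1
  rw [Cycle.coe_eq_coe]
  have h1 : le.rotate j ++ (v ++ (ld.rotate i ++ u))
      = (le.rotate j ++ v) ++ (ld.rotate i ++ u) := by rw [List.append_assoc]
  have h2 : ld.rotate i ++ (u ++ (le.rotate j ++ v))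
      = (ld.rotate i ++ u) ++ (le.rotate j ++ v) := by rw [List.append_assoc]
  rw [h1, h2]
  exact List.isRotated_append
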